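/- Transition probability, initializing phase: in the stationary simple random walk Y on G_K started at a vertex a whose digit sequence has N ≥ 2 constancy blocks of lengths M_1,...,M_N, the conditional probability that the step changes exactly one digit in the first block is P(ε_1 = 1 | Y(0) = a) = M_1/(M_1 + 1 + x_2^N), where x_2^N = [M_2; M_3,...,M_N,1] is the continued fraction 1/(M_2 + 1/(M_3 + ... + 1/(M_N+1))). -/

import Mathlib

open MeasureTheory ProbabilityTheory Finset

noncomputable section

/-- The sample space of the coupled construction: `ε`, `(α_k)`, `(β_k)`. -/
abbrev Omega (K : ℕ) := Bool × (Fin K → Fin 3) × (Fin K → Bool)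

/-- The uniform probability measure on `Omega K`; its coordinates are independent,
`ε` is uniform on `{-1,1}` (via `Bool`), each `α_k` is Bernoulli(1/3)
(`α_k = 1` iff the `Fin 3` coordinate equals `0`), each `β_k` uniform on `{-1,1}`. -/
def unif (K : ℕ) : Measure (Omega K) := (PMF.uniformOfFintype (Omega K)).toMeasure

def sgn (b : Bool) : ℤ := if b then 1 else -1

def epsRV {K : ℕ} (ω : Omega K) : ℤ := sgn ω.1

def alphaRV {K : ℕ} (k : Fin K) (ω : Omega K) : ℤ := if ω.2.1 k = 0 then 1 else 0

def alphaN {K : ℕ} (k : Fin K) (ω : Omega K) : ℕ := if ω.2.1 k = 0 then 1 else 0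

def betaRV {K : ℕ} (k : Fin K) (ω : Omega K) : ℤ := sgn (ω.2.2 k)

/-- `γ_{j+1} = ε · (-1)^{α_1 + ⋯ + α_j}` (0-indexed: `gammaRV j` is the paper's `γ_{j+1}`). -/
def gammaRV {K : ℕ} (j : ℕ) (ω : Omega K) : ℤ :=
  epsRV ω * (-1) ^ (∑ k ∈ Finset.univ.filter (fun k : Fin K => (k : ℕ) < j), alphaN k ω)

/-- `A_k = (1-α_k)β_k + α_k γ_k`. -/
def ARV {K : ℕ} (k : Fin K) (ω : Omega K) : ℤ :=
  (1 - alphaRV k ω) * betaRV k ω + alphaRV k ω * gammaRV (k : ℕ) ω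

/-- `B_k = (1-α_k)β_k - α_k γ_k`. -/
def BRV {K : ℕ} (k : Fin K) (ω : Omega K) : ℤ :=
  (1 - alphaRV k ω) * betaRV k ω - alphaRV k ω * gammaRV (k : ℕ) ω

/-- The nonzero coordinates of `v - u` have alternating signs: whenever `i < j` are
two "changed" coordinates with no changed coordinate strictly between them,
the changes have opposite signs. -/
def AltSigns {K : ℕ} (u v : Fin K → ℤ) : Prop :=
  ∀ i j : Fin K, i < j → u i ≠ v i → u j ≠ v j →
    (∀ l : Fin K, i < l → l < j → u l = v l) → v i - u i = -(v j - u j)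

/-- The first nonzero coordinate of `v - u` is negative if `s = true` (positive edges `E⁺`),
positive if `s = false` (negative edges `E⁻`). -/
def FirstSign {K : ℕ} (s : Bool) (u v : Fin K → ℤ) : Prop :=
  ∀ i : Fin K, u i ≠ v i → (∀ l : Fin K, l < i → u l = v l) →
    (if s then v i - u i < 0 else 0 < v i - u i)

/-- `(u,v)` is an edge of sign `s` of the multigraph `G_K`: either a loop (each vertex
carries one loop of each sign), or `u ≠ v` with alternating signs starting as dictated by `s`. -/
def IsEdge {K : ℕ} (s : Bool) (u v : Fin K → ℤ) : Prop :=
  u = v ∨ (u ≠ v ∧ AltSigns u v ∧ FirstSign s u v)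

/-- Interpret a Boolean vector as a vertex of `V_K = {-1,1}^K`. -/
def toPM {K : ℕ} (b : Fin K → Bool) : Fin K → ℤ := fun k => if b k then 1 else -1

/-- Partial sums `S_m = M_1 + ⋯ + M_m` of the block lengths. -/
def Ssum (M : ℕ → ℕ) (m : ℕ) : ℕ := ∑ k ∈ Finset.range m, M k

/-- 0-indexed block index of position `k` (positions `Ssum M j ≤ k < Ssum M (j+1)`
belong to block `j`). -/
def blk (M : ℕ → ℕ) (N : ℕ) (k : ℕ) : ℕ :=
  ((Finset.range N).filter (fun m => Ssum M (m + 1) ≤ k)).card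

/-- The vertex `a ∈ {-1,1}^K` whose maximal constancy blocks have lengths
`M_1, …, M_N` and whose first digit is `1` (so block `j` carries the value `(-1)^j`,
0-indexed). -/
def avert (M : ℕ → ℕ) (N : ℕ) {K : ℕ} : Fin K → ℤ :=
  fun k => if blk M N (k : ℕ) % 2 = 0 then 1 else -1

/-- Finite continued fraction: `cf [a₁, …, aₙ] = 1/(a₁ + 1/(a₂ + ⋯ + 1/(aₙ + 1)))`,
with `cf [] = 1`. -/
noncomputable def cf : List ℝ → ℝ
  | [] => 1
  | a :: l => 1 / (a + cf l)

/-- `x_j^N = [M_j; M_{j+1}, …, M_{N-1}, 1]` (0-indexed blocks `j, …, N-1`);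
for `j = N` this is the convention `x_{N+1}^N = 1`. -/
noncomputable def xcf (M : ℕ → ℕ) (N j : ℕ) : ℝ :=
  cf ((List.range (N - j)).map fun i => (M (j + i) : ℝ))

/-- `ε_j = 1`: the step of the walk changes a digit in the `j`-th (0-indexed)
constancy block, i.e. `B` differs from `A` at some position of block `j`. -/
def epsChange {K : ℕ} (M : ℕ → ℕ) (N : ℕ) (j : ℕ) (ω : Omega K) : Prop :=
  ∃ k : Fin K, blk M N (k : ℕ) = j ∧ BRV k ω ≠ ARV k ω
namespace Stmt14

/-- `h j`: weighted count of alternating block sequences. `h j = M_j h_{j+1} + h_{j+2}`. -/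
def hrec (M : ℕ → ℕ) (N : ℕ) : ℕ → ℕ := fun j =>
  if N ≤ j then 1 else M j * hrec M N (j+1) + hrec M N (j+2)
  termination_by j => N - j
  decreasing_by all_goals omega

lemma hrec_of_le {M N j} (h : N ≤ j) : hrec M N j = 1 := by rw [hrec]; simp [h]

lemma hrec_of_lt {M N j} (h : j < N) :
    hrec M N j = M j * hrec M N (j+1) + hrec M N (j+2) := by
  rw [hrec]; simp [Nat.not_le.mpr h]

lemma hrec_pos (M : ℕ → ℕ) (N : ℕ) (hM : ∀ m < N, 0 < M m) : ∀ j, 0 < hrec M N j := by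
  intro j
  by_cases h : N ≤ j
  · simp [hrec_of_le h]
  · rw [hrec_of_lt (by omega)]
    have := hrec_pos M N hM (j+2)
    omega
  termination_by j => N - j
  decreasing_by omega

/-- The continued fraction `xcf M N j` equals `h_{j+1} / h_j`. -/
lemma xcf_eq_hrec (M : ℕ → ℕ) (N : ℕ) (hM : ∀ m < N, 0 < M m) :
    ∀ j, xcf M N j = (hrec M N (j+1) : ℝ) / (hrec M N j) := by
  intro j
  by_cases h : N ≤ j
  · have : N - j = 0 := by omega
    simp [xcf, this, cf, hrec_of_le h, hrec_of_le (show N ≤ j+1 by omega)]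
  · have hNj : N - j = (N - (j+1)) + 1 := by omega
    have hx : xcf M N j = 1 / ((M j : ℝ) + xcf M N (j+1)) := by
      rw [xcf, hNj, List.range_succ_eq_map, List.map_cons, cf]
      congr 2
      rw [xcf, List.map_map]
      congr 1
      refine List.map_congr_left fun i _ => ?_
      show ((M (j + (i+1)) : ℝ)) = _
      congr 2
      omega
    rw [hx, xcf_eq_hrec M N hM (j+1)]
    have h1 : (0:ℝ) < hrec M N (j+1) := by exact_mod_cast hrec_pos M N hM (j+1)
    have h1' : (hrec M N (j+1):ℝ) ≠ 0 := h1.ne'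
    rw [show ((M j : ℝ) + (hrec M N (j+2):ℝ)/(hrec M N (j+1):ℝ))
        = ((M j * hrec M N (j+1) + hrec M N (j+2) : ℕ) : ℝ)/(hrec M N (j+1):ℝ) by
      push_cast; field_simp, one_div_div, hrec_of_lt (show j < N by omega)]
  termination_by j => N - j
  decreasing_by omega

end Stmt14
namespace Stmt14

/-- Boolean digit of the vertex `a`: `true` = `+1`. -/
def aB (M : ℕ → ℕ) (N : ℕ) (k : ℕ) : Bool := decide (blk M N k % 2 = 0)

/-- Transfer-matrix count: number of valid `α`-supports contained in `[n, K)`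
when the current sign is `σ`. -/
def cnt (M : ℕ → ℕ) (N K : ℕ) : ℕ → Bool → ℕ := fun n σ =>
  if K ≤ n then 1
  else cnt M N K (n+1) σ + (if aB M N n = σ then cnt M N K (n+1) (!σ) else 0)
  termination_by n => K - n
  decreasing_by all_goals omega

lemma cnt_of_le {M N K n σ} (h : K ≤ n) : cnt M N K n σ = 1 := by rw [cnt]; simp [h]

lemma cnt_of_lt {M N K n σ} (h : n < K) :
    cnt M N K n σ = cnt M N K (n+1) σ +
      (if aB M N n = σ then cnt M N K (n+1) (!σ) else 0) := by
  rw [cnt]; simp [Nat.not_le.mpr h]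

/-- A finset `S ⊆ [n, K)` is a valid `α`-support for starting sign `σ`. -/
def ValidFrom (M : ℕ → ℕ) (N K : ℕ) (n : ℕ) (σ : Bool) (S : Finset (Fin K)) : Prop :=
  (∀ x ∈ S, n ≤ (x : ℕ)) ∧
    ∀ x ∈ S, (σ ^^ decide ((S.filter (fun y => y < x)).card % 2 = 1)) = aB M N (x : ℕ)

instance {M N K n σ} : DecidablePred (ValidFrom M N K n σ) := fun S => by
  unfold ValidFrom; infer_instance

lemma decide_succ_mod (c : ℕ) : decide ((c+1) % 2 = 1) = !decide (c % 2 = 1) := by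
  rcases Nat.mod_two_eq_zero_or_one c with h | h <;> simp [Nat.add_mod, h]

lemma xor_succ (σ : Bool) (c : ℕ) :
    (σ ^^ decide ((c+1) % 2 = 1)) = (!σ ^^ decide (c % 2 = 1)) := by
  rw [decide_succ_mod]; cases σ <;> cases decide (c % 2 = 1) <;> rfl

lemma count_insert_lt {K : ℕ} (kn x : Fin K) (T : Finset (Fin K)) (hkn : kn ∉ T)
    (hx : kn < x) :
    ((insert kn T).filter (fun y => y < x)).card = (T.filter (fun y => y < x)).card + 1 := by
  rw [Finset.filter_insert, if_pos hx,
    Finset.card_insert_of_notMem (fun h => hkn (Finset.mem_of_mem_filter _ h))]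

lemma card_validFrom (M : ℕ → ℕ) (N K : ℕ) :
    ∀ n σ, ((Finset.univ : Finset (Finset (Fin K))).filter (ValidFrom M N K n σ)).card
      = cnt M N K n σ := by
  intro n σ
  by_cases h : K ≤ n
  · rw [cnt_of_le h]
    have : (Finset.univ : Finset (Finset (Fin K))).filter (ValidFrom M N K n σ) = {∅} := by
      ext S
      simp only [Finset.mem_filter, Finset.mem_univ, true_and, Finset.mem_singleton]
      constructor
      · rintro ⟨h1, -⟩
        refine Finset.eq_empty_iff_forall_notMem.mpr fun x hx => ?_
        have := h1 x hx
        have := x.2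
        omega
      · rintro rfl
        exact ⟨fun x hx => absurd hx (Finset.notMem_empty x),
               fun x hx => absurd hx (Finset.notMem_empty x)⟩
    rw [this, Finset.card_singleton]
  · push_neg at h
    set kn : Fin K := ⟨n, h⟩ with hkn
    have hsplit := Finset.card_filter_add_card_filter_not
      (s := (Finset.univ : Finset (Finset (Fin K))).filter (ValidFrom M N K n σ))
      (p := fun S => kn ∈ S)
    rw [Finset.filter_filter, Finset.filter_filter] at hsplit
    -- the part not containing kn
    have hnot : ((Finset.univ : Finset (Finset (Fin K))).filter
        (fun S => ValidFrom M N K n σ S ∧ ¬ kn ∈ S)).card = cnt M N K (n+1) σ := by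
      rw [← card_validFrom M N K (n+1) σ]
      congr 1
      apply Finset.filter_congr
      intro S _
      constructor
      · rintro ⟨⟨h1, h2⟩, hk⟩
        refine ⟨fun x hx => ?_, h2⟩
        have hnx := h1 x hx
        rcases Nat.lt_or_ge n (x : ℕ) with h' | h'
        · omega
        · exfalso; apply hk
          have : x = kn := Fin.ext (show (x:ℕ) = n by omega)
          rwa [this] at hx
      · rintro ⟨h1, h2⟩
        refine ⟨⟨fun x hx => le_trans (Nat.le_succ n) (h1 x hx), h2⟩, fun hk => ?_⟩
        have := h1 kn hk
        simp [hkn] at this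
    -- the part containing kn
    have hin : ((Finset.univ : Finset (Finset (Fin K))).filter
        (fun S => ValidFrom M N K n σ S ∧ kn ∈ S)).card
        = if aB M N n = σ then cnt M N K (n+1) (!σ) else 0 := by
      have hfilter0 : ∀ S : Finset (Fin K), ValidFrom M N K n σ S → kn ∈ S →
          (S.filter (fun y => y < kn)).card = 0 ∧ aB M N n = σ := by
        intro S hS hk
        have hc : S.filter (fun y => y < kn) = ∅ := by
          refine Finset.eq_empty_iff_forall_notMem.mpr fun y hy => ?_
          rw [Finset.mem_filter] at hy
          have := hS.1 y hy.1
          have : (y : ℕ) < n := hy.2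
          omega
        have := hS.2 kn hk
        rw [hc] at this
        simp at this
        exact ⟨by rw [hc]; simp, this.symm⟩
      by_cases ha : aB M N n = σ
      · rw [if_pos ha, ← card_validFrom M N K (n+1) (!σ)]
        refine Finset.card_nbij' (fun S => S.erase kn) (fun T => insert kn T)
          ?hi ?hj ?li ?ri
        case hi =>
          intro S hS
          rw [Finset.mem_coe, Finset.mem_filter] at hS
          obtain ⟨-, ⟨h1, h2⟩, hk⟩ := hS
          rw [Finset.mem_coe, Finset.mem_filter]
          refine ⟨Finset.mem_univ _, fun x hx => ?_, fun x hx => ?_⟩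
          · rw [Finset.mem_erase] at hx
            have := h1 x hx.2
            have hne : (x : ℕ) ≠ n := fun hc => hx.1 (Fin.ext hc)
            omega
          · rw [Finset.mem_erase] at hx
            have hxS : x ∈ S := hx.2
            have hSx := h2 x hxS
            have hrw : S = insert kn (S.erase kn) := (Finset.insert_erase hk).symm
            have hknx : kn < x := by
              have := h1 x hxS
              have hne : (x : ℕ) ≠ n := fun hc => hx.1 (Fin.ext hc)
              exact Fin.lt_def.mpr (by simp [hkn]; omega)
            rw [hrw, count_insert_lt kn x (S.erase kn) (Finset.notMem_erase _ _) hknx,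
              xor_succ] at hSx
            exact hSx
        case hj =>
          intro T hT
          rw [Finset.mem_coe, Finset.mem_filter] at hT
          obtain ⟨-, h1, h2⟩ := hT
          have hknT : kn ∉ T := fun hc => by have := h1 kn hc; simp [hkn] at this
          rw [Finset.mem_coe, Finset.mem_filter]
          refine ⟨Finset.mem_univ _, ⟨⟨fun x hx => ?_, fun x hx => ?_⟩,
            Finset.mem_insert_self _ _⟩⟩
          · rcases Finset.mem_insert.mp hx with rfl | hx
            · simp [hkn]
            · exact le_trans (Nat.le_succ n) (h1 x hx)
          · rcases Finset.mem_insert.mp hx with rfl | hx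
            · have hc : (insert kn T).filter (fun y => y < kn) = ∅ := by
                refine Finset.eq_empty_iff_forall_notMem.mpr fun y hy => ?_
                rw [Finset.mem_filter] at hy
                rcases Finset.mem_insert.mp hy.1 with rfl | hyT
                · exact absurd hy.2 (lt_irrefl _)
                · have := h1 y hyT
                  have : (y : ℕ) < n := hy.2
                  omega
              rw [hc]
              simpa [hkn] using ha.symm
            · have hknx : kn < x := by
                have := h1 x hx
                exact Fin.lt_def.mpr (by simp [hkn]; omega)
              show (σ ^^ decide ((((insert kn T).filter (fun y => y < x)).card) % 2 = 1))
                = aB M N (x : ℕ)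
              rw [count_insert_lt kn x T hknT hknx, xor_succ]
              exact h2 x hx
        case li =>
          intro S hS
          rw [Finset.mem_coe, Finset.mem_filter] at hS
          exact Finset.insert_erase hS.2.2
        case ri =>
          intro T hT
          rw [Finset.mem_coe, Finset.mem_filter] at hT
          have hknT : kn ∉ T := fun hc => by have := hT.2.1 kn hc; simp [hkn] at this
          exact Finset.erase_insert hknT
      · rw [if_neg ha, Finset.card_eq_zero]
        refine Finset.eq_empty_iff_forall_notMem.mpr fun S hS => ?_
        rw [Finset.mem_filter] at hS
        exact ha (hfilter0 S hS.2.1 hS.2.2).2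
    rw [cnt_of_lt h, ← hsplit, hin, hnot]
    ring
  termination_by n _ => K - n
  decreasing_by all_goals omega

end Stmt14
namespace Stmt14

lemma Ssum_mono (M : ℕ → ℕ) {a b : ℕ} (h : a ≤ b) : Ssum M a ≤ Ssum M b :=
  Finset.sum_le_sum_of_subset (Finset.range_subset_range.mpr h)

lemma Ssum_succ (M : ℕ → ℕ) (j : ℕ) : Ssum M (j+1) = Ssum M j + M j :=
  Finset.sum_range_succ M j

lemma blk_eq (M : ℕ → ℕ) (N : ℕ) {j k : ℕ} (hj : j < N) (h1 : Ssum M j ≤ k)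
    (h2 : k < Ssum M (j+1)) : blk M N k = j := by
  unfold blk
  have : (Finset.range N).filter (fun m => Ssum M (m+1) ≤ k) = Finset.range j := by
    ext m
    simp only [Finset.mem_filter, Finset.mem_range]
    constructor
    · rintro ⟨hmN, hm⟩
      by_contra hc
      push_neg at hc
      exact absurd (le_trans (Ssum_mono M (by omega : j + 1 ≤ m + 1)) hm) (by omega)
    · intro hm
      exact ⟨by omega, le_trans (Ssum_mono M (by omega : m + 1 ≤ j)) h1⟩
  rw [this, Finset.card_range]

lemma pB_succ (j : ℕ) : decide ((j+1) % 2 = 0) = !decide (j % 2 = 0) := by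
  rcases Nat.mod_two_eq_zero_or_one j with h | h <;> simp [Nat.add_mod, h]

lemma ne_not_self (b : Bool) : b ≠ !b := by cases b <;> simp

lemma cnt_eq (M : ℕ → ℕ) (N K : ℕ) (hM : ∀ m < N, 0 < M m) (hK : Ssum M N = K) :
    ∀ n j, j < N → Ssum M j ≤ n → n < Ssum M (j+1) →
      cnt M N K n (decide (j % 2 = 0))
          = hrec M N (j+2) + (Ssum M (j+1) - n) * hrec M N (j+1)
        ∧ cnt M N K n (!decide (j % 2 = 0)) = hrec M N (j+1) := by
  intro n j hj h1 h2
  have hnK : n < K := lt_of_lt_of_le h2 (hK ▸ Ssum_mono M (by omega : j + 1 ≤ N))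
  have haB : aB M N n = decide (j % 2 = 0) := by
    unfold aB; rw [blk_eq M N hj h1 h2]
  by_cases hcase : n + 1 < Ssum M (j+1)
  · obtain ⟨ih1, ih2⟩ := cnt_eq M N K hM hK (n+1) j hj (by omega) hcase
    constructor
    · rw [cnt_of_lt hnK, haB, if_pos rfl, ih1, ih2]
      have hss : Ssum M (j+1) - n = (Ssum M (j+1) - (n+1)) + 1 := by omega
      rw [hss]; ring
    · rw [cnt_of_lt hnK, haB,
        if_neg (fun hc => ne_not_self (decide (j % 2 = 0)) hc), ih2]
      omega
  · have hn1 : n + 1 = Ssum M (j+1) := by omega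
    have hSn : Ssum M (j+1) - n = 1 := by omega
    by_cases hjN : j + 1 < N
    · have hlt2 : Ssum M (j+1) < Ssum M (j+2) := by
        rw [Ssum_succ M (j+1)]
        have := hM (j+1) hjN
        omega
      obtain ⟨ih1, ih2⟩ := cnt_eq M N K hM hK (n+1) (j+1) hjN (by omega)
        (by rw [hn1]; exact hlt2)
    -- ih1 : cnt (n+1) (pB (j+1)) = hrec (j+3) + (Ssum (j+2) - (n+1)) * hrec (j+2)
    -- ih2 : cnt (n+1) (!pB (j+1)) = hrec (j+2)
      rw [pB_succ] at ih1 ih2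
      rw [Bool.not_not] at ih2
      have hMj1 : Ssum M (j+2) - (n+1) = M (j+1) := by
        rw [Ssum_succ M (j+1)]; omega
      rw [hMj1] at ih1
      have hh : cnt M N K (n+1) (!decide (j % 2 = 0)) = hrec M N (j+1) := by
        rw [ih1, hrec_of_lt hjN]
        ring_nf
      constructor
      · rw [cnt_of_lt hnK, haB, if_pos rfl, ih2, hh, hSn]
        ring
      · rw [cnt_of_lt hnK, haB,
          if_neg (fun hc => ne_not_self (decide (j % 2 = 0)) hc), hh]
        omega
    · have hK1 : K ≤ n + 1 := by
        have : Ssum M N ≤ Ssum M (j+1) := Ssum_mono M (by omega)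
        omega
      have e1 : hrec M N (j+2) = 1 := hrec_of_le (by omega)
      have e2 : hrec M N (j+1) = 1 := hrec_of_le (by omega)
      constructor
      · rw [cnt_of_lt hnK, haB, if_pos rfl, cnt_of_le hK1, cnt_of_le hK1, e1, e2, hSn]
      · rw [cnt_of_lt hnK, haB,
          if_neg (fun hc => ne_not_self (decide (j % 2 = 0)) hc), cnt_of_le hK1, e2]
  termination_by n => K - n
  decreasing_by all_goals omega

end Stmt14
namespace Stmt14

lemma Ssum_zero (M : ℕ → ℕ) : Ssum M 0 = 0 := by simp [Ssum]
lemma Ssum_one (M : ℕ → ℕ) : Ssum M 1 = M 0 := by simp [Ssum]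

lemma sgn_inj {a b : Bool} : sgn a = sgn b ↔ a = b := by
  cases a <;> cases b <;> simp [sgn]

lemma sgn_mul_pow (σ : Bool) (e : ℕ) :
    sgn σ * (-1:ℤ)^e = sgn (σ ^^ decide (e % 2 = 1)) := by
  rcases Nat.even_or_odd e with he | he
  · rw [Even.neg_one_pow he]
    have h2 : e % 2 = 0 := Nat.even_iff.mp he
    simp [h2, mul_one]
  · rw [Odd.neg_one_pow he]
    have h2 : e % 2 = 1 := Nat.odd_iff.mp he
    cases σ <;> simp [h2, sgn]

/-- The support of `α`. -/
def Zset {K : ℕ} (ω : Omega K) : Finset (Fin K) :=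
  Finset.univ.filter (fun k => ω.2.1 k = 0)

lemma gamma_eq {K : ℕ} (ω : Omega K) (k : Fin K) :
    gammaRV (k : ℕ) ω
      = sgn (ω.1 ^^ decide ((((Zset ω).filter (fun y => y < k)).card) % 2 = 1)) := by
  unfold gammaRV epsRV
  rw [← sgn_mul_pow]
  congr 2
  unfold alphaN Zset
  rw [Finset.sum_filter, Finset.filter_filter, Finset.card_filter]
  apply Finset.sum_congr rfl
  intro l _
  by_cases h1 : (l : ℕ) < (k : ℕ) <;> by_cases h2 : ω.2.1 l = 0 <;>
    simp [h1, h2, Fin.lt_def]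

lemma gamma_ne_zero {K : ℕ} (ω : Omega K) (j : ℕ) : gammaRV j ω ≠ 0 := by
  unfold gammaRV epsRV
  apply mul_ne_zero
  · cases ω.1 <;> simp [sgn]
  · exact pow_ne_zero _ (by norm_num)

lemma B_ne_A_iff {K : ℕ} (ω : Omega K) (k : Fin K) :
    BRV k ω ≠ ARV k ω ↔ ω.2.1 k = 0 := by
  constructor
  · intro hne
    by_contra hc
    apply hne
    unfold BRV ARV alphaRV
    rw [if_neg hc]
    ring
  · intro h0 hc
    apply gamma_ne_zero ω (k : ℕ)
    unfold BRV ARV alphaRV at hc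
    rw [if_pos h0] at hc
    linarith

lemma avert_eq_sgn (M : ℕ → ℕ) (N : ℕ) {K : ℕ} (k : Fin K) :
    avert M N k = sgn (aB M N (k : ℕ)) := by
  unfold avert aB sgn
  by_cases h : blk M N (k : ℕ) % 2 = 0 <;> simp [h]

lemma A_iff (M : ℕ → ℕ) (N K : ℕ) (ω : Omega K) :
    (∀ k, ARV k ω = avert M N k) ↔
      (ValidFrom M N K 0 ω.1 (Zset ω) ∧
        ∀ k, k ∉ Zset ω → ω.2.2 k = aB M N (k : ℕ)) := by
  have hmem : ∀ k : Fin K, k ∈ Zset ω ↔ ω.2.1 k = 0 := by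
    intro k; unfold Zset; simp
  have hA1 : ∀ k : Fin K, ω.2.1 k = 0 → ARV k ω = gammaRV (k : ℕ) ω := by
    intro k h; unfold ARV alphaRV; rw [if_pos h]; ring
  have hA2 : ∀ k : Fin K, ¬ ω.2.1 k = 0 → ARV k ω = sgn (ω.2.2 k) := by
    intro k h; unfold ARV alphaRV betaRV; rw [if_neg h]; ring
  constructor
  · intro hA
    refine ⟨⟨fun x _ => Nat.zero_le _, fun x hx => ?_⟩, fun k hk => ?_⟩
    · have h0 := (hmem x).mp hx
      have := hA x
      rw [hA1 x h0, gamma_eq, avert_eq_sgn] at this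
      exact sgn_inj.mp this
    · have h0 : ¬ ω.2.1 k = 0 := fun hc => hk ((hmem k).mpr hc)
      have := hA k
      rw [hA2 k h0, avert_eq_sgn] at this
      exact sgn_inj.mp this
  · rintro ⟨⟨-, h1⟩, h2⟩ k
    by_cases h0 : ω.2.1 k = 0
    · rw [hA1 k h0, gamma_eq, avert_eq_sgn]
      exact sgn_inj.mpr (h1 k ((hmem k).mpr h0))
    · rw [hA2 k h0, avert_eq_sgn]
      exact sgn_inj.mpr (h2 k (fun hc => h0 ((hmem k).mp hc)))

lemma blk_zero_iff (M : ℕ → ℕ) (N : ℕ) (hN : 1 ≤ N) (k : ℕ) :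
    blk M N k = 0 ↔ k < M 0 := by
  constructor
  · intro h
    by_contra hc
    push_neg at hc
    have h0 : 0 ∈ (Finset.range N).filter (fun m => Ssum M (m+1) ≤ k) := by
      simp only [Finset.mem_filter, Finset.mem_range]
      exact ⟨by omega, by rw [Ssum_one]; omega⟩
    have := Finset.card_pos.mpr ⟨0, h0⟩
    unfold blk at h
    omega
  · intro h
    exact blk_eq M N (by omega) (by rw [Ssum_zero]; omega) (by rw [Ssum_one]; omega)

lemma eps_iff (M : ℕ → ℕ) (N : ℕ) (hN : 1 ≤ N) {K : ℕ} (ω : Omega K) :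
    epsChange M N 0 ω ↔ ∃ k ∈ Zset ω, (k : ℕ) < M 0 := by
  unfold epsChange
  constructor
  · rintro ⟨k, h1, h2⟩
    refine ⟨k, ?_, (blk_zero_iff M N hN _).mp h1⟩
    unfold Zset; simp [(B_ne_A_iff ω k).mp h2]
  · rintro ⟨k, h1, h2⟩
    refine ⟨k, (blk_zero_iff M N hN _).mpr h2, (B_ne_A_iff ω k).mpr ?_⟩
    unfold Zset at h1; simpa using h1

end Stmt14
namespace Stmt14

lemma count_beta {K : ℕ} (S : Finset (Fin K)) (g : Fin K → Bool) :
    ((Finset.univ : Finset (Fin K → Bool)).filter (fun β => ∀ k ∉ S, β k = g k)).card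
      = 2 ^ S.card := by
  have h1 : (Finset.univ : Finset (Fin K → Bool)).filter (fun β => ∀ k ∉ S, β k = g k)
      = Fintype.piFinset (fun k => if k ∈ S then (Finset.univ : Finset Bool) else {g k}) := by
    ext f
    simp only [Finset.mem_filter, Finset.mem_univ, true_and, Fintype.mem_piFinset]
    constructor
    · intro h k
      by_cases hk : k ∈ S <;> simp [hk, h k]
    · intro h k hk
      have := h k
      simpa [hk] using this
  rw [h1, Fintype.card_piFinset]
  have h2 : ∀ k : Fin K,
      ((if k ∈ S then (Finset.univ : Finset Bool) else {g k})).card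
        = if k ∈ S then 2 else 1 := by
    intro k; by_cases hk : k ∈ S <;> simp [hk]
  rw [Finset.prod_congr rfl (fun k _ => h2 k), ← Finset.prod_filter,
    Finset.filter_mem_eq_inter, Finset.univ_inter, Finset.prod_const]

lemma mem_pair_iff (x : Fin 3) : x ∈ ({1, 2} : Finset (Fin 3)) ↔ ¬ x = 0 := by
  revert x; decide

lemma count_alpha {K : ℕ} (S : Finset (Fin K)) :
    ((Finset.univ : Finset (Fin K → Fin 3)).filter
      (fun α => Finset.univ.filter (fun k => α k = 0) = S)).card = 2 ^ (K - S.card) := by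
  have h1 : (Finset.univ : Finset (Fin K → Fin 3)).filter
        (fun α => Finset.univ.filter (fun k => α k = 0) = S)
      = Fintype.piFinset
          (fun k => if k ∈ S then ({0} : Finset (Fin 3)) else ({1, 2} : Finset (Fin 3))) := by
    ext α
    simp only [Finset.mem_filter, Finset.mem_univ, true_and, Fintype.mem_piFinset]
    rw [Finset.ext_iff]
    constructor
    · intro h k
      have hk0 := h k
      simp only [Finset.mem_filter, Finset.mem_univ, true_and] at hk0
      by_cases hk : k ∈ S
      · simp [hk, hk0.mpr hk]
      · rw [if_neg hk, mem_pair_iff]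
        exact fun hc => hk (hk0.mp hc)
    · intro h k
      simp only [Finset.mem_filter, Finset.mem_univ, true_and]
      have hk0 := h k
      by_cases hk : k ∈ S
      · rw [if_pos hk, Finset.mem_singleton] at hk0
        exact ⟨fun _ => hk, fun _ => hk0⟩
      · rw [if_neg hk, mem_pair_iff] at hk0
        exact ⟨fun hc => absurd hc hk0, fun hc => absurd hc hk⟩
  rw [h1, Fintype.card_piFinset]
  have h2 : ∀ k : Fin K,
      ((if k ∈ S then ({0} : Finset (Fin 3)) else ({1, 2} : Finset (Fin 3)))).card
        = if k ∈ S then 1 else 2 := by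
    intro k; by_cases hk : k ∈ S <;> simp [hk]
  rw [Finset.prod_congr rfl (fun k _ => h2 k)]
  have h3 : ∀ k : Fin K, (if k ∈ S then (1:ℕ) else 2) = if k ∉ S then 2 else 1 := by
    intro k; by_cases hk : k ∈ S <;> simp [hk]
  rw [Finset.prod_congr rfl (fun k _ => h3 k), ← Finset.prod_filter, Finset.prod_const]
  congr 1
  have := Finset.card_filter_add_card_filter_not
    (s := (Finset.univ : Finset (Fin K))) (p := fun k => k ∈ S)
  rw [Finset.filter_mem_eq_inter, Finset.univ_inter, Finset.card_univ, Fintype.card_fin]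
    at this
  omega

lemma card_omega (M : ℕ → ℕ) (N K : ℕ) (Q : Finset (Fin K) → Prop) [DecidablePred Q] :
    ((Finset.univ : Finset (Omega K)).filter
        (fun ω => (∀ k, ARV k ω = avert M N k) ∧ Q (Zset ω))).card
      = 2^K * ∑ σ : Bool,
          ((Finset.univ : Finset (Finset (Fin K))).filter
            (fun S => ValidFrom M N K 0 σ S ∧ Q S)).card := by
  rw [Finset.card_filter, Fintype.sum_prod_type]
  have hmain : ∀ ε : Bool,
      (∑ p : (Fin K → Fin 3) × (Fin K → Bool),
        if (∀ k, ARV k (ε, p) = avert M N k) ∧ Q (Zset (ε, p)) then 1 else 0)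
      = 2^K * ((Finset.univ : Finset (Finset (Fin K))).filter
            (fun S => ValidFrom M N K 0 ε S ∧ Q S)).card := by
    intro ε
    rw [Fintype.sum_prod_type]
    have hZ : ∀ (α : Fin K → Fin 3) (β : Fin K → Bool),
        Zset ((ε, α, β) : Omega K) = Finset.univ.filter (fun k => α k = 0) := fun _ _ => rfl
    have hinner : ∀ α : Fin K → Fin 3,
        (∑ β : Fin K → Bool,
          if (∀ k, ARV k (ε, α, β) = avert M N k) ∧ Q (Zset ((ε, α, β) : Omega K))
          then (1:ℕ) else 0)
        = if ValidFrom M N K 0 ε (Finset.univ.filter (fun k => α k = 0))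
              ∧ Q (Finset.univ.filter (fun k => α k = 0))
          then 2 ^ (Finset.univ.filter (fun k => α k = 0)).card else 0 := by
      intro α
      by_cases hvq : ValidFrom M N K 0 ε (Finset.univ.filter (fun k => α k = 0))
          ∧ Q (Finset.univ.filter (fun k => α k = 0))
      · rw [if_pos hvq]
        have : ∀ β : Fin K → Bool,
            ((∀ k, ARV k (ε, α, β) = avert M N k) ∧ Q (Zset ((ε, α, β) : Omega K)))
            ↔ (∀ k ∉ Finset.univ.filter (fun k => α k = 0), β k = aB M N (k : ℕ)) := by
          intro β
          rw [A_iff M N K, hZ]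
          constructor
          · rintro ⟨⟨-, h2⟩, -⟩; exact h2
          · intro h; exact ⟨⟨hvq.1, h⟩, hvq.2⟩
        calc (∑ β : Fin K → Bool,
              if (∀ k, ARV k (ε, α, β) = avert M N k) ∧ Q (Zset ((ε, α, β) : Omega K))
              then (1:ℕ) else 0)
            = ∑ β : Fin K → Bool,
              if (∀ k ∉ Finset.univ.filter (fun k => α k = 0), β k = aB M N (k : ℕ))
              then (1:ℕ) else 0 := by
              apply Finset.sum_congr rfl
              intro β _
              rw [if_congr (this β) rfl rfl]
          _ = ((Finset.univ : Finset (Fin K → Bool)).filter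
                (fun β => ∀ k ∉ Finset.univ.filter (fun k => α k = 0),
                  β k = aB M N (k : ℕ))).card := (Finset.card_filter _ _).symm
          _ = 2 ^ (Finset.univ.filter (fun k => α k = 0)).card :=
              count_beta _ (fun k => aB M N (k : ℕ))
      · rw [if_neg hvq]
        apply Finset.sum_eq_zero
        intro β _
        rw [if_neg]
        intro hc
        apply hvq
        rw [A_iff M N K, hZ] at hc
        exact ⟨hc.1.1, hc.2⟩
    rw [Finset.sum_congr rfl (fun α _ => hinner α)]
    -- group by the fiber Zf α = S
    rw [← Finset.sum_fiberwise_of_maps_to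
      (g := fun α : Fin K → Fin 3 => Finset.univ.filter (fun k => α k = 0))
      (t := (Finset.univ : Finset (Finset (Fin K)))) (fun _ _ => Finset.mem_univ _)]
    have hfiber : ∀ S : Finset (Fin K),
        (∑ α ∈ Finset.univ.filter
            (fun α : Fin K → Fin 3 => Finset.univ.filter (fun k => α k = 0) = S),
          if ValidFrom M N K 0 ε (Finset.univ.filter (fun k => α k = 0))
              ∧ Q (Finset.univ.filter (fun k => α k = 0))
          then 2 ^ (Finset.univ.filter (fun k => α k = 0)).card else 0)
        = if ValidFrom M N K 0 ε S ∧ Q S then 2 ^ K else 0 := by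
      intro S
      have : ∀ α ∈ Finset.univ.filter
          (fun α : Fin K → Fin 3 => Finset.univ.filter (fun k => α k = 0) = S),
          (if ValidFrom M N K 0 ε (Finset.univ.filter (fun k => α k = 0))
              ∧ Q (Finset.univ.filter (fun k => α k = 0))
          then 2 ^ (Finset.univ.filter (fun k => α k = 0)).card else 0)
          = if ValidFrom M N K 0 ε S ∧ Q S then 2 ^ S.card else 0 := by
        intro α hα
        rw [Finset.mem_filter] at hα
        rw [hα.2]
      rw [Finset.sum_congr rfl this, Finset.sum_const, count_alpha, smul_eq_mul]
      by_cases hvq : ValidFrom M N K 0 ε S ∧ Q S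
      · rw [if_pos hvq, if_pos hvq, ← pow_add]
        congr 1
        have : S.card ≤ K := by simpa using Finset.card_le_univ S
        omega
      · rw [if_neg hvq, if_neg hvq, mul_zero]
    rw [Finset.sum_congr rfl (fun S _ => hfiber S)]
    rw [← Finset.sum_filter, Finset.sum_const, smul_eq_mul, mul_comm]
  rw [Finset.sum_congr rfl (fun ε _ => hmain ε), ← Finset.mul_sum]

end Stmt14
namespace Stmt14

open scoped ENNReal

lemma enn_ratio (a b c : ℕ) (ha : 0 < a) (hc : 0 < c) :
    ((a : ℝ≥0∞) / c)⁻¹ * ((b : ℝ≥0∞) / c) = (b : ℝ≥0∞) / a := by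
  rw [ENNReal.inv_div (Or.inl (ENNReal.natCast_ne_top c))
      (Or.inl (by exact_mod_cast hc.ne'))]
  rw [div_eq_mul_inv, div_eq_mul_inv, div_eq_mul_inv]
  have h : (c : ℝ≥0∞) * (a : ℝ≥0∞)⁻¹ * ((b : ℝ≥0∞) * (c : ℝ≥0∞)⁻¹)
      = ((c : ℝ≥0∞) * (c : ℝ≥0∞)⁻¹) * ((b : ℝ≥0∞) * (a : ℝ≥0∞)⁻¹) := by ring
  rw [h, ENNReal.mul_inv_cancel (by exact_mod_cast hc.ne') (ENNReal.natCast_ne_top c),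
    one_mul]

lemma fintype_card_setOf {α : Type*} [Fintype α] (p : α → Prop) [DecidablePred p]
    [Fintype ({x | p x} : Set α)] :
    Fintype.card ({x | p x} : Set α) = (Finset.univ.filter p).card := by
  rw [← Set.toFinset_card, Set.toFinset_setOf]

end Stmt14

open Stmt14
open scoped ENNReal


/-- Initializing phase (Theorem 1): for a vertex `a` with `N ≥ 2` constancy blocks of
lengths `M_0, …, M_{N-1}` (0-indexed), the stationary walk on `G_K` satisfies
`P(ε_1 = 1 | Y(0) = a) = M_1/(M_1 + 1 + x_2^N)` — here block `0` plays the paper's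
role of block `1`, and `xcf M N 1` is the continued fraction `x_2^N`. -/
theorem stmt14 (K N : ℕ) (M : ℕ → ℕ) (hN : 2 ≤ N) (hM : ∀ m < N, 0 < M m)
    (hK : ∑ m ∈ Finset.range N, M m = K) :
    ProbabilityTheory.cond (unif K) {ω | ∀ k : Fin K, ARV k ω = avert M N k}
        {ω | epsChange M N 0 ω} =
      ENNReal.ofReal ((M 0 : ℝ) / ((M 0 : ℝ) + 1 + xcf M N 1)) := by
  classical
  have hN1 : 1 ≤ N := by omega
  have hKS : Ssum M N = K := hK
  have hd0 : decide ((0:ℕ) % 2 = 0) = true := by decide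
  have hd1 : decide ((1:ℕ) % 2 = 0) = false := by decide
  have h0eq : hrec M N 0 = M 0 * hrec M N 1 + hrec M N 2 := hrec_of_lt (by omega)
  have h1eq : hrec M N 1 = M 1 * hrec M N 2 + hrec M N 3 := hrec_of_lt (by omega)
  -- cnt at 0
  have hcnt0 := cnt_eq M N K hM hKS 0 0 (by omega) (by simp [Ssum_zero])
    (by rw [Ssum_one]; exact hM 0 (by omega))
  rw [hd0] at hcnt0
  obtain ⟨hc0t, hc0f⟩ := hcnt0
  have hc0t' : cnt M N K 0 true = hrec M N 0 := by
    rw [hc0t, Ssum_one, Nat.sub_zero, h0eq]; ring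
  have hc0f' : cnt M N K 0 false = hrec M N 1 := by
    rw [show false = !true by rfl]; exact hc0f
  -- cnt at M 0
  have hcntM := cnt_eq M N K hM hKS (M 0) 1 (by omega) (by rw [Ssum_one])
    (by rw [Ssum_succ, Ssum_one]; have := hM 1 (by omega); omega)
  rw [hd1] at hcntM
  obtain ⟨hcMf, hcMt⟩ := hcntM
  have hcMf' : cnt M N K (M 0) false = hrec M N 1 := by
    rw [hcMf, show (1:ℕ)+2 = 3 by rfl, show (1:ℕ)+1 = 2 by rfl,
      show Ssum M 2 - M 0 = M 1 by rw [Ssum_succ, Ssum_one]; omega, h1eq]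
    ring
  have hcMt' : cnt M N K (M 0) true = hrec M N 2 := by
    rw [show true = !false by rfl, hcMt]
  -- numerator pair count
  have hsplitσ : ∀ σ : Bool,
      ((Finset.univ : Finset (Finset (Fin K))).filter
        (fun S => ValidFrom M N K 0 σ S ∧ ∃ k ∈ S, (k:ℕ) < M 0)).card
      + cnt M N K (M 0) σ = cnt M N K 0 σ := by
    intro σ
    have hsp := Finset.card_filter_add_card_filter_not
      (s := (Finset.univ : Finset (Finset (Fin K))).filter (ValidFrom M N K 0 σ))
      (p := fun S => ∃ k ∈ S, (k:ℕ) < M 0)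
    rw [Finset.filter_filter, Finset.filter_filter, card_validFrom] at hsp
    have heq : (Finset.univ : Finset (Finset (Fin K))).filter
          (fun S => ValidFrom M N K 0 σ S ∧ ¬ ∃ k ∈ S, (k:ℕ) < M 0)
        = (Finset.univ : Finset (Finset (Fin K))).filter (ValidFrom M N K (M 0) σ) := by
      apply Finset.filter_congr
      intro S _
      push_neg
      constructor
      · rintro ⟨⟨-, h2⟩, h3⟩
        exact ⟨fun x hx => h3 x hx, h2⟩
      · rintro ⟨h1, h2⟩
        exact ⟨⟨fun x _ => Nat.zero_le _, h2⟩, fun x hx => h1 x hx⟩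
    rw [heq, card_validFrom] at hsp
    have hco : ∀ S : Finset (Fin K),
        (ValidFrom M N K 0 σ S ∧ ∃ k ∈ S, (k:ℕ) < M 0)
          ↔ (ValidFrom M N K 0 σ S ∧ ∃ k ∈ S, (k:ℕ) < M 0) := fun _ => Iff.rfl
    exact hsp
  have hNpair : (∑ σ : Bool, ((Finset.univ : Finset (Finset (Fin K))).filter
        (fun S => ValidFrom M N K 0 σ S ∧ ∃ k ∈ S, (k:ℕ) < M 0)).card)
      = M 0 * hrec M N 1 := by
    rw [Fintype.sum_bool]
    have ht := hsplitσ true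
    have hf := hsplitσ false
    rw [hcMt', hc0t', h0eq] at ht
    rw [hcMf', hc0f'] at hf
    -- ht : cardT + hrec 2 = M 0 * hrec 1 + hrec 2 ; hf : cardF + hrec 1 = hrec 1
    omega
  have hDpair : (∑ σ : Bool, ((Finset.univ : Finset (Finset (Fin K))).filter
        (fun S => ValidFrom M N K 0 σ S ∧ True)).card)
      = hrec M N 0 + hrec M N 1 := by
    rw [Fintype.sum_bool]
    have hdrop : ∀ σ : Bool, ((Finset.univ : Finset (Finset (Fin K))).filter
        (fun S => ValidFrom M N K 0 σ S ∧ True)).card = cnt M N K 0 σ := by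
      intro σ
      rw [← card_validFrom M N K 0 σ]
      congr 1
      apply Finset.filter_congr
      intro S _
      simp
    rw [hdrop true, hdrop false, hc0t', hc0f']
  -- ω-level counts
  have hDen : ((Finset.univ : Finset (Omega K)).filter
        (fun ω => (∀ k, ARV k ω = avert M N k) ∧ True)).card
      = 2^K * (hrec M N 0 + hrec M N 1) := by
    rw [card_omega M N K (fun _ => True), hDpair]
  have hNum : ((Finset.univ : Finset (Omega K)).filter
        (fun ω => (∀ k, ARV k ω = avert M N k) ∧ ∃ k ∈ Zset ω, (k:ℕ) < M 0)).card
      = 2^K * (M 0 * hrec M N 1) := by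
    rw [card_omega M N K (fun S => ∃ k ∈ S, (k:ℕ) < M 0), hNpair]
  -- measure computations
  have hμ : ∀ p : Omega K → Prop, ∀ hp : DecidablePred p,
      unif K {ω | p ω}
        = (((Finset.univ.filter p).card : ℝ≥0∞)) / (Fintype.card (Omega K)) := by
    intro p hp
    rw [unif, PMF.toMeasure_uniformOfFintype_apply _ ((Set.to_countable _).measurableSet)]
    congr 2
    have h1 := fintype_card_setOf (α := Omega K) p
    convert h1 using 2 <;> first | rfl | exact Subsingleton.elim _ _
  have hms : MeasurableSet {ω : Omega K | ∀ k, ARV k ω = avert M N k} :=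
    (Set.to_countable _).measurableSet
  rw [ProbabilityTheory.cond_apply hms]
  have hst : {ω : Omega K | ∀ k, ARV k ω = avert M N k} ∩ {ω | epsChange M N 0 ω}
      = {ω : Omega K | (∀ k, ARV k ω = avert M N k) ∧ ∃ k ∈ Zset ω, (k:ℕ) < M 0} := by
    ext ω
    simp only [Set.mem_inter_iff, Set.mem_setOf_eq]
    rw [eps_iff M N hN1]
  have hs : {ω : Omega K | ∀ k, ARV k ω = avert M N k}
      = {ω : Omega K | (∀ k, ARV k ω = avert M N k) ∧ True} := by
    simp
  rw [hst, hs, hμ _ (by infer_instance), hμ _ (by infer_instance)]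
  rw [Finset.filter_congr_decidable, Finset.filter_congr_decidable, hDen, hNum]
  -- positivity facts
  have hp1 : 0 < hrec M N 1 := hrec_pos M N hM 1
  have hp0 : 0 < hrec M N 0 := hrec_pos M N hM 0
  have hp2 : 0 < hrec M N 2 := hrec_pos M N hM 2
  have hcard : 0 < Fintype.card (Omega K) := Fintype.card_pos
  rw [enn_ratio _ _ _ (by positivity) hcard]
  -- final real computation
  rw [show ((2^K * (M 0 * hrec M N 1) : ℕ) : ℝ≥0∞)
      = ENNReal.ofReal ((2^K * (M 0 * hrec M N 1) : ℕ) : ℝ) by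
    rw [ENNReal.ofReal_natCast]]
  rw [show ((2^K * (hrec M N 0 + hrec M N 1) : ℕ) : ℝ≥0∞)
      = ENNReal.ofReal ((2^K * (hrec M N 0 + hrec M N 1) : ℕ) : ℝ) by
    rw [ENNReal.ofReal_natCast]]
  rw [← ENNReal.ofReal_div_of_pos (by positivity)]
  congr 1
  rw [xcf_eq_hrec M N hM 1]
  have e0 : (hrec M N 0 : ℝ) = M 0 * hrec M N 1 + hrec M N 2 := by exact_mod_cast h0eq
  have hp1' : (0:ℝ) < hrec M N 1 := by exact_mod_cast hp1
  have hp0' : (0:ℝ) < hrec M N 0 := by exact_mod_cast hp0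
  have hp2' : (0:ℝ) < hrec M N 2 := by exact_mod_cast hp2
  push_cast
  rw [e0]
  rw [div_eq_div_iff (by positivity) (by positivity)]
  field_simp
  ring
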